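/- Let Ω be a nonnegative symmetric closed convex set in ℝ^n, s ∈ {1,...,n-1}, and a ∈ ℝ^n. Suppose y is a projection of a onto C_s ∩ Ω with ‖y‖₀ < s. Then y is the unique projection of a onto C_s ∩ Ω, i.e., the set of minimizers of ‖x - a‖ over x ∈ C_s ∩ Ω is the singleton {y}. -/

import Mathlib

open scoped RealInnerProductSpace

noncomputable section

/-- Euclidean space ℝ^n. -/
abbrev E (n : ℕ) := EuclideanSpace ℝ (Fin n)

/-- Support of a vector, as a finset. -/
def spt {n : ℕ} (x : E n) : Finset (Fin n) := Finset.univ.filter (fun i => x i ≠ 0)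

/-- A set is symmetric if it is invariant under coordinate permutations. -/
def IsSymmSet {n : ℕ} (X : Set (E n)) : Prop :=
  ∀ x ∈ X, ∀ σ : Equiv.Perm (Fin n), (WithLp.toLp 2 (fun i => x (σ i)) : E n) ∈ X

/-- A set is sign-free symmetric if it is symmetric and invariant under sign flips. -/
def IsSignFreeSymmSet {n : ℕ} (X : Set (E n)) : Prop :=
  IsSymmSet X ∧ ∀ x ∈ X, ∀ ε : Fin n → ℝ, (∀ i, ε i = 1 ∨ ε i = -1) →
    (WithLp.toLp 2 (fun i => ε i * x i) : E n) ∈ X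

/-- A set is nonnegative symmetric if it is symmetric and contained in ℝ^n_+. -/
def IsNonnegSymmSet {n : ℕ} (X : Set (E n)) : Prop :=
  IsSymmSet X ∧ ∀ x ∈ X, ∀ i, 0 ≤ x i

/-- `y` is a (Euclidean) projection of `x` onto `X`. -/
def IsProj {n : ℕ} (X : Set (E n)) (x y : E n) : Prop :=
  y ∈ X ∧ ∀ z ∈ X, ‖y - x‖ ≤ ‖z - x‖

/-- The set of s-sparse vectors. -/
def Cs (n s : ℕ) : Set (E n) := {x | (spt x).card ≤ s}

lemma normsq_sub {n : ℕ} (x a : E n) : ‖x - a‖^2 = ∑ i, (x i - a i)^2 := by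
  rw [EuclideanSpace.norm_eq, Real.sq_sqrt (by positivity)]
  refine Finset.sum_congr rfl fun i _ => ?_
  simp [Real.norm_eq_abs, sq_abs]

lemma norm_sub_le_iff' {n : ℕ} (x z a : E n) :
    ‖x - a‖ ≤ ‖z - a‖ ↔ ∑ i, (x i - a i)^2 ≤ ∑ i, (z i - a i)^2 := by
  rw [← normsq_sub, ← normsq_sub]
  exact (pow_le_pow_iff_left₀ (norm_nonneg _) (norm_nonneg _) two_ne_zero).symm

lemma spt_perm {n : ℕ} (x : E n) (σ : Equiv.Perm (Fin n)) :
    spt (WithLp.toLp 2 (fun i => x (σ i)) : E n) = (spt x).image σ.symm := by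
  ext i
  simp only [spt, Finset.mem_filter, Finset.mem_univ, true_and, Finset.mem_image]
  constructor
  · intro h; exact ⟨σ i, h, σ.symm_apply_apply i⟩
  · rintro ⟨b, hb, rfl⟩; rw [Equiv.apply_symm_apply]; exact hb

lemma perm_mem_Cs {n s : ℕ} {x : E n} (hx : x ∈ Cs n s) (σ : Equiv.Perm (Fin n)) :
    (WithLp.toLp 2 (fun i => x (σ i)) : E n) ∈ Cs n s := by
  show (spt (WithLp.toLp 2 (fun i => x (σ i)) : E n)).card ≤ s
  rw [spt_perm, Finset.card_image_of_injective _ σ.symm.injective]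
  exact hx

lemma swap_sum {n : ℕ} (x a : E n) {j k : Fin n} (hjk : j ≠ k) :
    ∑ i, (x (Equiv.swap j k i) - a i)^2
      = (∑ i, (x i - a i)^2) + 2*(x j - x k)*(a j - a k) := by
  have key : ∑ i, ((x (Equiv.swap j k i) - a i)^2 - (x i - a i)^2)
      = ∑ i ∈ ({j, k} : Finset (Fin n)), ((x (Equiv.swap j k i) - a i)^2 - (x i - a i)^2) := by
    refine (Finset.sum_subset (Finset.subset_univ _) ?_).symm
    intro i _ hi
    simp only [Finset.mem_insert, Finset.mem_singleton, not_or] at hi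
    rw [Equiv.swap_apply_of_ne_of_ne hi.1 hi.2]
    ring
  rw [Finset.sum_sub_distrib, Finset.sum_pair hjk, Equiv.swap_apply_left,
    Equiv.swap_apply_right] at key
  linear_combination key

lemma proj_mono {n s : ℕ} {Ω : Set (E n)} (hnn : IsNonnegSymmSet Ω) (a : E n)
    {w : E n} (hw : IsProj (Cs n s ∩ Ω) a w) {j k : Fin n} (hj : w j ≠ 0) (hk : w k = 0) :
    a k ≤ a j := by
  have hjk : j ≠ k := fun h => hj (h ▸ hk)
  have h1 : (WithLp.toLp 2 (fun i => w (Equiv.swap j k i)) : E n) ∈ Cs n s ∩ Ω :=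
    ⟨perm_mem_Cs hw.1.1 _, hnn.1 w hw.1.2 _⟩
  have h2 := hw.2 _ h1
  rw [norm_sub_le_iff'] at h2
  have h3 := swap_sum w a hjk
  have hpos : 0 < w j := lt_of_le_of_ne (hnn.2 w hw.1.2 j) (Ne.symm hj)
  nlinarith [h2, h3, hpos, hk]

lemma mid_eq {n s : ℕ} {Ω : Set (E n)} (hconv : Convex ℝ Ω) {a y z : E n}
    (hy : IsProj (Cs n s ∩ Ω) a y) (hz : IsProj (Cs n s ∩ Ω) a z)
    (hcard : (spt y ∪ spt z).card ≤ s) : z = y := by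
  set m : E n := (1/2 : ℝ) • y + (1/2 : ℝ) • z with hm
  have hmΩ : m ∈ Ω := hconv hy.1.2 hz.1.2 (by norm_num) (by norm_num) (by norm_num)
  have hmC : m ∈ Cs n s := by
    refine le_trans (Finset.card_le_card ?_) hcard
    intro i hi
    simp only [spt, Finset.mem_filter, Finset.mem_univ, true_and, Finset.mem_union] at *
    by_contra hcon
    push_neg at hcon
    apply hi
    have hmi : m i = (1/2:ℝ) * y i + (1/2:ℝ) * z i := by
      show ((1/2:ℝ) • y + (1/2:ℝ) • z) i = _
      simp [PiLp.add_apply, PiLp.smul_apply, smul_eq_mul]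
    rw [hmi, hcon.1, hcon.2]; ring
  have h1 := hy.2 m ⟨hmC, hmΩ⟩
  have heq : ‖z - a‖ = ‖y - a‖ := le_antisymm (hz.2 y hy.1) (hy.2 z hz.1)
  have hm2 : m - a = (1/2 : ℝ) • ((y - a) + (z - a)) := by
    rw [hm]; module
  have hpar := parallelogram_law_with_norm ℝ (y - a) (z - a)
  have hmn : ‖m - a‖ = (1/2) * ‖(y - a) + (z - a)‖ := by
    rw [hm2, norm_smul]; norm_num
  have hyz : (y - a) - (z - a) = y - z := by module
  rw [hyz] at hpar
  have h2 : ‖y - z‖ * ‖y - z‖ ≤ 0 := by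
    nlinarith [h1, hmn, hpar, heq, norm_nonneg (y - a), norm_nonneg (m - a)]
  have h3 : ‖y - z‖ * ‖y - z‖ = 0 :=
    le_antisymm h2 (mul_self_nonneg _)
  have h4 : y - z = 0 := norm_eq_zero.mp (mul_self_eq_zero.mp h3)
  exact (sub_eq_zero.mp h4).symm

lemma mem_spt {n : ℕ} {x : E n} {i : Fin n} : i ∈ spt x ↔ x i ≠ 0 := by
  simp [spt]

theorem stmt5 {n s : ℕ} (Ω : Set (E n)) (hcl : IsClosed Ω) (hnn : IsNonnegSymmSet Ω)
    (hconv : Convex ℝ Ω) (hs1 : 1 ≤ s) (hs2 : s < n)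
    (a y : E n) (hy : IsProj (Cs n s ∩ Ω) a y) (hcard : (spt y).card < s) :
    ∀ z : E n, IsProj (Cs n s ∩ Ω) a z → z = y := by
  have key : ∀ d : ℕ, ∀ z : E n, IsProj (Cs n s ∩ Ω) a z → (spt z \ spt y).card ≤ d →
      z = y := by
    intro d
    induction d with
    | zero =>
      intro z hz hc
      have hsub : spt z ⊆ spt y := by
        rw [← Finset.sdiff_eq_empty_iff_subset]
        exact Finset.card_eq_zero.mp (Nat.le_zero.mp hc)
      exact mid_eq hconv hy hz (by
        rw [Finset.union_eq_left.mpr hsub]; exact hcard.le)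
    | succ d ih =>
      intro z hz hc
      by_cases hcu : (spt y ∪ spt z).card ≤ s
      · exact mid_eq hconv hy hz hcu
      exfalso
      obtain ⟨j, hj⟩ : ∃ j, j ∈ spt z \ spt y := by
        by_contra h
        push_neg at h
        have hsub : spt z ⊆ spt y := fun i hi => by
          by_contra hni; exact h i (Finset.mem_sdiff.mpr ⟨hi, hni⟩)
        exact hcu (by rw [Finset.union_eq_left.mpr hsub]; exact hcard.le)
      obtain ⟨k, hk⟩ : ∃ k, k ∈ spt y \ spt z := by
        by_contra h
        push_neg at h
        have hsub : spt y ⊆ spt z := fun i hi => by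
          by_contra hni; exact h i (Finset.mem_sdiff.mpr ⟨hi, hni⟩)
        exact hcu (by rw [Finset.union_eq_right.mpr hsub]; exact hz.1.1)
      rw [Finset.mem_sdiff] at hj hk
      have hzj : z j ≠ 0 := mem_spt.mp hj.1
      have hyj : y j = 0 := by
        by_contra h; exact hj.2 (mem_spt.mpr h)
      have hyk : y k ≠ 0 := mem_spt.mp hk.1
      have hzk : z k = 0 := by
        by_contra h; exact hk.2 (mem_spt.mpr h)
      have hjk : j ≠ k := fun h => hzj (h ▸ hzk)
      have hajk : a j = a k :=
        le_antisymm (proj_mono hnn a hy hyk hyj) (proj_mono hnn a hz hzj hzk)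
      have hz'proj : IsProj (Cs n s ∩ Ω) a (WithLp.toLp 2 (fun i => z (Equiv.swap j k i)) : E n) := by
        refine ⟨⟨perm_mem_Cs hz.1.1 _, hnn.1 z hz.1.2 _⟩, ?_⟩
        intro w hw
        refine le_trans ?_ (hz.2 w hw)
        rw [norm_sub_le_iff']
        have h3 := swap_sum z a hjk
        have h4 : 2*(z j - z k)*(a j - a k) = 0 := by rw [hajk]; ring
        rw [h4, add_zero] at h3
        exact le_of_eq h3
      have hsptz' : spt (WithLp.toLp 2 (fun i => z (Equiv.swap j k i)) : E n) \ spt y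
          = (spt z \ spt y).erase j := by
        ext i
        simp only [Finset.mem_erase, Finset.mem_sdiff, mem_spt, not_not]
        constructor
        · rintro ⟨hi1, hi2⟩
          rcases eq_or_ne i j with rfl | hij
          · rw [Equiv.swap_apply_left] at hi1; exact absurd hzk hi1
          rcases eq_or_ne i k with rfl | hik
          · exact absurd hi2 hyk
          · rw [Equiv.swap_apply_of_ne_of_ne hij hik] at hi1
            exact ⟨hij, hi1, hi2⟩
        · rintro ⟨hij, hi1, hi2⟩
          have hik : i ≠ k := fun h => hi1 (h ▸ hzk)
          rw [Equiv.swap_apply_of_ne_of_ne hij hik]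
          exact ⟨hi1, hi2⟩
      have hzy : (WithLp.toLp 2 (fun i => z (Equiv.swap j k i)) : E n) = y := by
        refine ih _ hz'proj ?_
        rw [hsptz', Finset.card_erase_of_mem (Finset.mem_sdiff.mpr ⟨hj.1, hj.2⟩)]
        omega
      have hzval : ∀ i, z i = y (Equiv.swap j k i) := by
        intro i
        have h5 : z (Equiv.swap j k (Equiv.swap j k i))
            = y (Equiv.swap j k i) := congrFun (congrArg WithLp.ofLp hzy) (Equiv.swap j k i)
        rwa [Equiv.swap_apply_self] at h5
      have hzsub : spt z ⊆ insert j (spt y) := by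
        intro i hi
        rw [mem_spt, hzval i] at hi
        rcases eq_or_ne i j with rfl | hij
        · exact Finset.mem_insert_self _ _
        rcases eq_or_ne i k with rfl | hik
        · rw [Equiv.swap_apply_right] at hi; exact absurd hyj hi
        · rw [Equiv.swap_apply_of_ne_of_ne hij hik] at hi
          exact Finset.mem_insert_of_mem (mem_spt.mpr hi)
      apply hcu
      have hU : spt y ∪ spt z ⊆ insert j (spt y) :=
        Finset.union_subset (Finset.subset_insert _ _) hzsub
      have h5 := Finset.card_le_card hU
      have h6 := Finset.card_insert_le j (spt y)
      omega
  intro z hz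
  exact key (spt z \ spt y).card z hz le_rfl
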